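/- Let H be the 3-uniform hypergraph with vertex set [n]×[n] and edges {ab, ac, db} for a,b,c,d ∈ [n] with c > b and d > a (where xy denotes the pair (x,y)). Then the independence number of H is less than 2n. -/

import Mathlib

/-- The 3-uniform hypergraph `H` on `[n] × [n]` with edges `{(a,b),(a,c),(d,b)}`
for `c > b`, `d > a` has independence number less than `2n`: every set `S` of
vertices containing no edge of `H` has fewer than `2n` elements. -/
theorem stmt1 (n : ℕ) (hn : 2 ≤ n) (S : Finset (Fin n × Fin n))
    (hind : ¬ ∃ a b c d : Fin n, b < c ∧ a < d ∧
      (a, b) ∈ S ∧ (a, c) ∈ S ∧ (d, b) ∈ S) :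
    S.card < 2 * n := by
  push_neg at hind
  rcases S.eq_empty_or_nonempty with hS | hS
  · simp [hS]; omega
  · obtain ⟨p, hpS, hp⟩ := S.exists_max_image toLex hS
    have hmax : ∀ q ∈ S, q.1 < p.1 ∨ (q.1 = p.1 ∧ q.2 ≤ p.2) := by
      intro q hq
      have := hp q hq
      rwa [Prod.Lex.le_iff] at this
    have key : S.card ≤
        ((Finset.univ : Finset (Fin n ⊕ Fin n)).erase (Sum.inr p.2)).card := by
      apply Finset.card_le_card_of_injOn
        (fun q => if ∃ c, q.2 < c ∧ (q.1, c) ∈ S then Sum.inr q.2 else Sum.inl q.1)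
      · intro q hq
        simp only [Finset.mem_coe, Finset.mem_erase, Finset.mem_univ, and_true]
        split_ifs with h
        · obtain ⟨c, hc, hcS⟩ := h
          intro heq
          have hq2 : q.2 = p.2 := by simpa using heq
          rcases hmax q hq with h1 | ⟨h1, h2⟩
          · exact hind q.1 q.2 c p.1 hc h1 hq hcS (hq2 ▸ hpS)
          · rcases hmax (q.1, c) hcS with h3 | ⟨h3, h4⟩
            · simp at h3; omega
            · simp at h4; omega
        · simp
      · intro q hq r hr heq
        simp only at heq
        split_ifs at heq with h1 h2 h2
        · have h22 : q.2 = r.2 := by simpa using heq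
          obtain ⟨c, hc, hcS⟩ := h1
          obtain ⟨c', hc', hc'S⟩ := h2
          rcases lt_trichotomy q.1 r.1 with h | h | h
          · exact absurd (hind q.1 q.2 c r.1 hc h hq hcS (h22 ▸ hr)) not_false
          · exact Prod.ext h h22
          · exact absurd (hind r.1 r.2 c' q.1 hc' h hr hc'S (h22 ▸ hq)) not_false
        · have h11 : q.1 = r.1 := by simpa using heq
          push_neg at h1 h2
          rcases lt_trichotomy q.2 r.2 with h | h | h
          · exact (h1 r.2 h (by rw [h11]; exact hr)).elim
          · exact Prod.ext h11 h
          · exact (h2 q.2 h (by rw [← h11]; exact hq)).elim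
    have hcard : ((Finset.univ : Finset (Fin n ⊕ Fin n)).erase (Sum.inr p.2)).card
        = n + n - 1 := by
      rw [Finset.card_erase_of_mem (Finset.mem_univ _)]
      simp
    omega
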